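/- Let T be a tensor triangulated category with internal Hom as above, and let S be a colocalizing subcategory of T. Then for every X in the localizing subcategory generated by the tensor unit 𝟙 and every Y in S, the internal Hom object Hom(X,Y) is in S. In particular, if 𝟙 generates T, every colocalizing subcategory of T is Hom closed. -/
import Mathlib


open CategoryTheory Limits Pretriangulated Opposite MonoidalCategory

universe v u

variable {T : Type u} [Category.{v} T]

section Defs

variable [Preadditive T] [HasZeroObject T] [HasShift T ℤ]
  [∀ n : ℤ, (CategoryTheory.shiftFunctor T n).Additive] [Pretriangulated T]

/-- A localizing subcategory: a (strictly full) triangulated subcategory closed under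
set-indexed coproducts, encoded as a set of objects. -/
def IsLocalizing [HasCoproducts.{v} T] (S : Set T) : Prop :=
  (∀ X Y : T, X ∈ S → (X ≅ Y) → Y ∈ S) ∧
  (∀ X ∈ S, ∀ n : ℤ, X⟦n⟧ ∈ S) ∧
  (∀ Tri : Triangle T, Tri ∈ (distTriang T) →
    Tri.obj₁ ∈ S → Tri.obj₂ ∈ S → Tri.obj₃ ∈ S) ∧
  (∀ {ι : Type v} (X : ι → T), (∀ i, X i ∈ S) → (∐ X) ∈ S)

/-- A colocalizing subcategory: a (strictly full) triangulated subcategory closed under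
set-indexed products, encoded as a set of objects. -/
def IsColocalizing [HasProducts.{v} T] (S : Set T) : Prop :=
  (∀ X Y : T, X ∈ S → (X ≅ Y) → Y ∈ S) ∧
  (∀ X ∈ S, ∀ n : ℤ, X⟦n⟧ ∈ S) ∧
  (∀ Tri : Triangle T, Tri ∈ (distTriang T) →
    Tri.obj₁ ∈ S → Tri.obj₂ ∈ S → Tri.obj₃ ∈ S) ∧
  (∀ {ι : Type v} (X : ι → T), (∀ i, X i ∈ S) → (∏ᶜ X) ∈ S)

/-- The localizing subcategory generated by a class of objects. -/
def locGen [HasCoproducts.{v} T] (A : Set T) : Set T :=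
  ⋂₀ {S : Set T | IsLocalizing S ∧ A ⊆ S}

end Defs

/-- **Lemma (Hom-closed).** Let `T` be a tensor triangulated category with internal function
objects (with `Hom(-,Y)` exact and sending coproducts to products), and `S` a colocalizing
subcategory of `T`.  Then `Hom(X,Y) ∈ S` for every `X` in the localizing subcategory
generated by the tensor unit `𝟙` and every `Y ∈ S`.  In particular, if `𝟙` generates `T`,
then every colocalizing subcategory of `T` is Hom closed. -/
theorem stmt13 [Preadditive T] [HasZeroObject T] [HasShift T ℤ]
    [∀ n : ℤ, (CategoryTheory.shiftFunctor T n).Additive] [Pretriangulated T]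
    [HasCoproducts.{v} T] [HasProducts.{v} T]
    [MonoidalCategory T] [SymmetricCategory T] [MonoidalClosed T]
    (hexact : ∀ (Y : T) (Tri : Triangle T), Tri ∈ (distTriang T) →
      ∃ δ : (ihom Tri.obj₁).obj Y ⟶ ((ihom Tri.obj₃).obj Y)⟦(1 : ℤ)⟧,
        Triangle.mk ((MonoidalClosed.pre Tri.mor₂).app Y)
          ((MonoidalClosed.pre Tri.mor₁).app Y) δ ∈ distTriang T)
    (hshift : ∀ (Y X : T) (n : ℤ),
      Nonempty ((ihom (X⟦n⟧)).obj Y ≅ ((ihom X).obj Y)⟦-n⟧))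
    (hprod : ∀ (Y : T) {ι : Type v} (X : ι → T) (c : Cofan X), IsColimit c →
      Nonempty (IsLimit (Fan.mk ((ihom c.pt).obj Y)
        (fun i => (MonoidalClosed.pre (c.inj i)).app Y))))
    (S : Set T) (hS : IsColocalizing S) :
    (∀ X ∈ locGen {(𝟙_ T)}, ∀ Y ∈ S, (ihom X).obj Y ∈ S) ∧
    ((∀ Z : T, Z ∈ locGen {(𝟙_ T)}) →
      ∀ X Y : T, Y ∈ S → (ihom X).obj Y ∈ S) := by
  set C : Set T := {X : T | ∀ Y ∈ S, (ihom X).obj Y ∈ S} with hC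
  obtain ⟨hSiso, hSshift, hStri, hSprod⟩ := hS
  have hCloc : IsLocalizing C := by
    refine ⟨?_, ?_, ?_, ?_⟩
    · rintro X X' hX e Y hY
      have i : (ihom X).obj Y ≅ (ihom X').obj Y :=
        { hom := (MonoidalClosed.pre e.inv).app Y
          inv := (MonoidalClosed.pre e.hom).app Y
          hom_inv_id := by
            rw [← NatTrans.comp_app, ← MonoidalClosed.pre_map, e.hom_inv_id,
              MonoidalClosed.pre_id, NatTrans.id_app]
          inv_hom_id := by
            rw [← NatTrans.comp_app, ← MonoidalClosed.pre_map, e.inv_hom_id,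
              MonoidalClosed.pre_id, NatTrans.id_app] }
      exact hSiso _ _ (hX Y hY) i
    · rintro X hX n Y hY
      obtain ⟨i⟩ := hshift Y X n
      exact hSiso _ _ (hSshift _ (hX Y hY) (-n)) i.symm
    · rintro Tri hTri h1 h2 Y hY
      obtain ⟨δ, hδ⟩ := hexact Y Tri hTri
      have hrot := Pretriangulated.rot_of_distTriang _ hδ
      have h3 : ((ihom Tri.obj₃).obj Y)⟦(1 : ℤ)⟧ ∈ S :=
        hStri _ hrot (h2 Y hY) (h1 Y hY)
      exact hSiso _ _ (hSshift _ h3 (-1)) (shiftShiftNeg _ 1)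
    · rintro ι X hX Y hY
      obtain ⟨hl⟩ := hprod Y X _ (coproductIsCoproduct X)
      have i := IsLimit.conePointUniqueUpToIso
        (limit.isLimit (Discrete.functor fun i => (ihom (X i)).obj Y)) hl
      exact hSiso _ _ (hSprod (fun i => (ihom (X i)).obj Y) (fun i => hX i Y hY)) i
  have hunit : (𝟙_ T) ∈ C := by
    intro Y hY
    exact hSiso _ _ hY (MonoidalClosed.unitNatIso.app Y)
  have hmain : ∀ X ∈ locGen {(𝟙_ T)}, ∀ Y ∈ S, (ihom X).obj Y ∈ S := by
    intro X hX Y hY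
    exact hX C ⟨hCloc, by simpa using hunit⟩ Y hY
  exact ⟨hmain, fun hall X Y hY => hmain X (hall X) Y hY⟩
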